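/- Suppose S and T are crystals, each generated from a single weight-zero element by the f_i operators, with all elements reachable and e_i the partial inverse of f_i, and suppose M : S → T is a surjective map commuting with all f_i, with wt, and with ε_i. Then M is a crystal isomorphism (in particular injective). -/

import Mathlib

/-- suppose S and T are crystals (with operators eS/fS resp. eT/fT,
weight functions into I →₀ ℤ, string functions epsS/epsT), each generated from a
single weight-zero element by the f_i operators, with e_i the partial inverse of
f_i, weights strictly decreasing by the simple root single i 1 under f_i, and
upper normal (e_i(b) ≠ 0 iff ε_i(b) > 0). If M : S → T is surjective and commutes
with all f_i, with wt and with ε_i, then M is an isomorphism of crystals; in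
particular M is injective and commutes with the e_i. -/
theorem crystal_surjective_morphism_is_iso {I S T : Type*}
    (eS fS : I → S → Option S) (wtS : S → (I →₀ ℤ)) (epsS : I → S → ℤ) (s0 : S)
    (eT fT : I → T → Option T) (wtT : T → (I →₀ ℤ)) (epsT : I → T → ℤ) (t0 : T)
    (hwtS0 : wtS s0 = 0) (hS0uniq : ∀ b : S, wtS b = 0 → b = s0)
    (hwtT0 : wtT t0 = 0) (hT0uniq : ∀ b : T, wtT b = 0 → b = t0)
    (hinvS : ∀ i b b', eS i b = some b' ↔ fS i b' = some b)
    (hinvT : ∀ i b b', eT i b = some b' ↔ fT i b' = some b)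
    (hfwtS : ∀ i b b', fS i b = some b' → wtS b' = wtS b - Finsupp.single i 1)
    (hfwtT : ∀ i b b', fT i b = some b' → wtT b' = wtT b - Finsupp.single i 1)
    (hnormalS : ∀ i b, eS i b ≠ none ↔ 0 < epsS i b)
    (hnormalT : ∀ i b, eT i b ≠ none ↔ 0 < epsT i b)
    (hgenS : ∀ b : S, ∃ js : List I,
      js.foldl (fun ob j => ob.bind (fS j)) (some s0) = some b)
    (hgenT : ∀ b : T, ∃ js : List I,
      js.foldl (fun ob j => ob.bind (fT j)) (some t0) = some b)
    (M : S → T) (hsurj : Function.Surjective M)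
    (hMf : ∀ i b, Option.map M (fS i b) = fT i (M b))
    (hMwt : ∀ b, wtT (M b) = wtS b)
    (hMeps : ∀ i b, epsT i (M b) = epsS i b) :
    Function.Bijective M ∧ ∀ i b, Option.map M (eS i b) = eT i (M b) := by
  -- M commutes with e
  have hMe : ∀ i b b', eS i b = some b' → eT i (M b) = some (M b') := by
    intro i b b' h
    have hf : fS i b' = some b := (hinvS i b b').mp h
    have := hMf i b'
    rw [hf] at this
    exact (hinvT i (M b) (M b')).mpr this.symm
  -- injectivity, by induction on a generating word (reversed)
  have key : ∀ js : List I, ∀ a b : S,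
      js.foldl (fun ob j => ob.bind (fS j)) (some s0) = some a → M a = M b → a = b := by
    intro js
    induction js using List.reverseRecOn with
    | nil =>
      intro a b ha hab
      simp only [List.foldl_nil, Option.some.injEq] at ha
      subst ha
      have : wtS b = 0 := by
        rw [← hMwt b, ← hab, hMwt, hwtS0]
      rw [hS0uniq b this]
    | append_singleton js i ih =>
      intro a b ha hab
      rw [List.foldl_append, List.foldl_cons, List.foldl_nil] at ha
      obtain ⟨a'', ha'', hfa⟩ := Option.bind_eq_some_iff.mp ha
      have hea : eS i a = some a'' := (hinvS i a a'').mpr hfa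
      have heps : 0 < epsS i a := (hnormalS i a).mp (by simp [hea])
      have hepsb : 0 < epsS i b := by
        rw [← hMeps i b, ← hab, hMeps]; exact heps
      have heb : eS i b ≠ none := (hnormalS i b).mpr hepsb
      obtain ⟨b'', heb'⟩ := Option.ne_none_iff_exists'.mp heb
      have h1 : eT i (M a) = some (M a'') := hMe i a a'' hea
      have h2 : eT i (M b) = some (M b'') := hMe i b b'' heb'
      rw [hab, h2, Option.some.injEq] at h1
      have : a'' = b'' := ih a'' b'' ha'' h1.symm
      subst this
      have := ((hinvS i a a'').mp hea).symm.trans ((hinvS i b a'').mp heb')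
      exact Option.some.injEq _ _ ▸ this
  have hinj : Function.Injective M := by
    intro a b hab
    obtain ⟨js, hjs⟩ := hgenS a
    exact key js a b hjs hab
  refine ⟨⟨hinj, hsurj⟩, ?_⟩
  intro i b
  cases he : eS i b with
  | none =>
    have : ¬ 0 < epsT i (M b) := by
      rw [hMeps]
      exact fun h => ((hnormalS i b).mpr h) he
    have : eT i (M b) = none := by
      by_contra h
      exact this ((hnormalT i (M b)).mp h)
    simp [this]
  | some b' =>
    simp [hMe i b b' he]
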